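/- For an integer l ≥ 2, the supremum over x, y > 0 of f_l(x,y) = y^{2l-2}(x² + y²)/(x^{2l} + y^{2l}) equals (1/l) ζ_l^{l-1}, where ζ_l is the unique positive root of (l-1) + l z - z^l = 0. -/

import Mathlib

lemma amgm_two (l : ℕ) (hl : 1 ≤ l) (a b : ℝ) (ha : 0 ≤ a) (hb : 0 ≤ b) :
    (l : ℝ) * a * b ^ (l - 1) ≤ a ^ l + ((l : ℝ) - 1) * b ^ l := by
  induction l, hl using Nat.le_induction with
  | base => simp
  | succ l hl ih =>
    have hb1 : b ^ (l - 1) * b = b ^ l := by rw [← pow_succ, Nat.sub_add_cancel hl]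
    have ihb' : (l : ℝ) * a * b ^ l ≤ a ^ l * b + ((l : ℝ) - 1) * (b ^ l * b) := by
      have := mul_le_mul_of_nonneg_right ih hb
      calc (l : ℝ) * a * b ^ l = (l : ℝ) * a * b ^ (l - 1) * b := by
            rw [← hb1]; ring
        _ ≤ (a ^ l + ((l : ℝ) - 1) * b ^ l) * b := this
        _ = a ^ l * b + ((l : ℝ) - 1) * (b ^ l * b) := by ring
    have key : 0 ≤ (a ^ l - b ^ l) * (a - b) := by
      rcases le_total a b with h | h
      · nlinarith [pow_le_pow_left₀ ha h l]
      · nlinarith [pow_le_pow_left₀ hb h l]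
    push_cast
    rw [pow_succ, pow_succ]
    nlinarith [ihb', key]

theorem stmt5 (l : ℕ) (hl : 2 ≤ l) (ζ : ℝ) (hζ : 0 < ζ)
    (hroot : ((l : ℝ) - 1) + l * ζ - ζ ^ l = 0)
    (huniq : ∀ z : ℝ, 0 < z → ((l : ℝ) - 1) + l * z - z ^ l = 0 → z = ζ) :
    IsLUB {s : ℝ | ∃ x : ℝ, 0 < x ∧ ∃ y : ℝ, 0 < y ∧
        s = y ^ (2 * l - 2) * (x ^ 2 + y ^ 2) / (x ^ (2 * l) + y ^ (2 * l))}
      ((1 / l) * ζ ^ (l - 1)) := by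
  have hl1 : 1 ≤ l := by omega
  have hlpos : (0:ℝ) < l := by exact_mod_cast Nat.pos_of_ne_zero (by omega)
  have hζl : ζ ^ l = ((l:ℝ) - 1) + l * ζ := by linarith
  have hζp : ζ ^ (l - 1) * ζ = ζ ^ l := by rw [← pow_succ, Nat.sub_add_cancel hl1]
  apply IsGreatest.isLUB
  constructor
  · -- membership: attained at x = 1, y = √ζ
    refine ⟨1, one_pos, Real.sqrt ζ, Real.sqrt_pos.2 hζ, ?_⟩
    have hs2 : Real.sqrt ζ ^ 2 = ζ := Real.sq_sqrt hζ.le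
    have h1 : Real.sqrt ζ ^ (2 * l - 2) = ζ ^ (l - 1) := by
      rw [show 2 * l - 2 = 2 * (l - 1) by omega, pow_mul, hs2]
    have h2 : Real.sqrt ζ ^ (2 * l) = ζ ^ l := by rw [pow_mul, hs2]
    have hden : (1:ℝ) ^ (2 * l) + Real.sqrt ζ ^ (2 * l) = l * (1 + ζ) := by
      rw [h2, one_pow, hζl]; ring
    rw [h1, hs2, one_pow, hden]
    have h1ζ : (1:ℝ) + ζ ≠ 0 := by positivity
    field_simp
  · -- upper bound
    rintro s ⟨x, hx, y, hy, rfl⟩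
    have e1 : y ^ (2 * l - 2) = (y ^ 2) ^ (l - 1) := by
      rw [← pow_mul]; congr 1; omega
    have e2 : x ^ (2 * l) = (x ^ 2) ^ l := by rw [← pow_mul]
    have e3 : y ^ (2 * l) = (y ^ 2) ^ l := by rw [← pow_mul]
    rw [e1, e2, e3]
    set a := x ^ 2 with ha
    set b := y ^ 2 with hb
    have hap : 0 < a := by positivity
    have hbp : 0 < b := by positivity
    have hdenp : 0 < a ^ l + b ^ l := by positivity
    rw [div_le_iff₀ hdenp, one_div, inv_mul_eq_div, div_mul_eq_mul_div,
      le_div_iff₀ hlpos, ← mul_le_mul_iff_of_pos_right hζ]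
    have hb1 : b ^ (l - 1) * b = b ^ l := by rw [← pow_succ, Nat.sub_add_cancel hl1]
    have key := amgm_two l hl1 (ζ * a) b (by positivity) hbp.le
    have hma : (ζ * a) ^ l = ζ ^ l * a ^ l := mul_pow ζ a l
    calc b ^ (l - 1) * (a + b) * l * ζ
        = (l : ℝ) * (ζ * a) * b ^ (l - 1) + l * ζ * (b ^ (l - 1) * b) := by ring
      _ ≤ (ζ * a) ^ l + ((l:ℝ) - 1) * b ^ l + l * ζ * b ^ l := by
          rw [hb1]; linarith
      _ = ζ ^ l * a ^ l + (((l:ℝ) - 1) + l * ζ) * b ^ l := by rw [hma]; ring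
      _ = ζ ^ l * a ^ l + ζ ^ l * b ^ l := by rw [hζl]
      _ = ζ ^ (l - 1) * (a ^ l + b ^ l) * ζ := by rw [← hζp]; ring
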